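/- Let T > 0, let ψ ∈ C²([0,T] × [−M,M]) vanish on the lateral boundary {x = ±M} together with ∂ₜψ, and let a, ζ : [0,T] × [−M,M] → ℝ be continuous with a ≥ η > 0, 1/2 ≤ ζ(t) ≤ 1, ∂ₜζ ≥ c > 0 (ζ depending only on t). Suppose ψ satisfies ∂ₜψ + (1/α) a ∂ₓₓψ = 0 with ψ(T,·) = θ. Then ∫₀ᵀ∫_{−M}^{M} ∂ₜζ (∂ₓψ)² dx dt + (2/α) ∫₀ᵀ∫_{−M}^{M} ζ a (∂ₓₓψ)² dx dt ≤ ∫_{−M}^{M} ζ(T)(∂ₓθ)² dx; in particular c ∫₀ᵀ∫ (∂ₓψ)² dx dt + (1/α) ∫₀ᵀ∫ a (∂ₓₓψ)² dx dt ≤ ‖∂ₓθ‖²_{L²}. -/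

import Mathlib

open Real Set intervalIntegral MeasureTheory
open scoped Interval

section Setup
variable (T M : ℝ) (ψ : ℝ → ℝ → ℝ)

/-- The space-time rectangle. -/
def Rect : Set (ℝ × ℝ) := Icc 0 T ×ˢ Icc (-M) M

/-- Uncurried function. -/
def Psi : ℝ × ℝ → ℝ := fun p => ψ p.1 p.2

/-- first derivative within the rectangle -/
noncomputable def fd1 : ℝ × ℝ → (ℝ × ℝ) →L[ℝ] ℝ := fderivWithin ℝ (Psi ψ) (Rect T M)

noncomputable def fd2 : ℝ × ℝ → (ℝ × ℝ) →L[ℝ] (ℝ × ℝ) →L[ℝ] ℝ :=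
  fderivWithin ℝ (fd1 T M ψ) (Rect T M)

/-- ∂ₓψ -/
noncomputable def Uu (t x : ℝ) : ℝ := fd1 T M ψ (t, x) (0, 1)
/-- ∂ₜψ -/
noncomputable def Vv (t x : ℝ) : ℝ := fd1 T M ψ (t, x) (1, 0)
/-- ∂ₓₓψ -/
noncomputable def Ww (t x : ℝ) : ℝ := fd2 T M ψ (t, x) (0, 1) (0, 1)
/-- ∂ₜₓψ -/
noncomputable def Xx (t x : ℝ) : ℝ := fd2 T M ψ (t, x) (1, 0) (0, 1)

variable {T M ψ}
variable (hT : 0 < T) (hM : 0 < M)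
variable (hψ : ContDiffOn ℝ 2 (Psi ψ) (Rect T M))

lemma rect_uniqueDiffOn (hT : 0 < T) (hM : 0 < M) : UniqueDiffOn ℝ (Rect T M) :=
  (uniqueDiffOn_Icc hT).prod (uniqueDiffOn_Icc (by linarith))

lemma rect_interior : interior (Rect T M) = Ioo 0 T ×ˢ Ioo (-M) M := by
  rw [Rect, interior_prod_eq, interior_Icc, interior_Icc]

lemma mem_rect {T M t x : ℝ} (ht : t ∈ Icc 0 T) (hx : x ∈ Icc (-M) M) :
    (t, x) ∈ Rect T M := Set.mk_mem_prod ht hx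

lemma rect_mem_nhds {t x : ℝ} (ht : t ∈ Ioo 0 T) (hx : x ∈ Ioo (-M) M) :
    Rect T M ∈ nhds (t, x) := by
  rw [← mem_interior_iff_mem_nhds, rect_interior]
  exact Set.mk_mem_prod ht hx

include hT hM hψ

lemma fd1_contOn : ContinuousOn (fd1 T M ψ) (Rect T M) :=
  hψ.continuousOn_fderivWithin (rect_uniqueDiffOn hT hM) (by norm_num)

lemma fd1_contDiffOn : ContDiffOn ℝ 1 (fd1 T M ψ) (Rect T M) :=
  hψ.fderivWithin (rect_uniqueDiffOn hT hM) (by norm_num)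

lemma fd2_contOn : ContinuousOn (fd2 T M ψ) (Rect T M) :=
  (fd1_contDiffOn hT hM hψ).continuousOn_fderivWithin (rect_uniqueDiffOn hT hM) le_rfl

lemma fd1_hasWithin {p : ℝ × ℝ} (hp : p ∈ Rect T M) :
    HasFDerivWithinAt (Psi ψ) (fd1 T M ψ p) (Rect T M) p :=
  ((hψ.differentiableOn two_ne_zero) p hp).hasFDerivWithinAt

lemma fd2_hasWithin {p : ℝ × ℝ} (hp : p ∈ Rect T M) :
    HasFDerivWithinAt (fd1 T M ψ) (fd2 T M ψ p) (Rect T M) p :=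
  (((fd1_contDiffOn hT hM hψ).differentiableOn one_ne_zero) p hp).hasFDerivWithinAt

lemma fd1_hasAt {p : ℝ × ℝ} (hp : p ∈ Ioo 0 T ×ˢ Ioo (-M) M) :
    HasFDerivAt (Psi ψ) (fd1 T M ψ p) p := by
  have hn : Rect T M ∈ nhds p := rect_mem_nhds hp.1 hp.2
  have : fd1 T M ψ p = fderiv ℝ (Psi ψ) p := fderivWithin_of_mem_nhds hn
  rw [this]
  exact ((hψ.contDiffAt hn).differentiableAt two_ne_zero).hasFDerivAt

lemma fd2_hasAt {p : ℝ × ℝ} (hp : p ∈ Ioo 0 T ×ˢ Ioo (-M) M) :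
    HasFDerivAt (fd1 T M ψ) (fd2 T M ψ p) p := by
  have hn : Rect T M ∈ nhds p := rect_mem_nhds hp.1 hp.2
  have : fd2 T M ψ p = fderiv ℝ (fd1 T M ψ) p := fderivWithin_of_mem_nhds hn
  rw [this]
  exact (((fd1_contDiffOn hT hM hψ).contDiffAt hn).differentiableAt one_ne_zero).hasFDerivAt

lemma fd2_symm {p : ℝ × ℝ} (hp : p ∈ Ioo 0 T ×ˢ Ioo (-M) M) (v w : ℝ × ℝ) :
    fd2 T M ψ p v w = fd2 T M ψ p w v := by
  apply second_derivative_symmetric_of_eventually (f := Psi ψ) ?_ (fd2_hasAt hT hM hψ hp)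
  have hop : IsOpen (Ioo 0 T ×ˢ Ioo (-M) M : Set (ℝ × ℝ)) := isOpen_Ioo.prod isOpen_Ioo
  filter_upwards [hop.mem_nhds hp] with q hq
  exact fd1_hasAt hT hM hψ hq

end Setup

section Slice
variable {T M : ℝ} {ψ : ℝ → ℝ → ℝ}
variable (hT : 0 < T) (hM : 0 < M)
variable (hψ : ContDiffOn ℝ 2 (Psi ψ) (Rect T M))
include hT hM hψ

/-- spatial derivative, within version -/
lemma hasU {t x : ℝ} (ht : t ∈ Icc 0 T) (hx : x ∈ Icc (-M) M) :
    HasDerivWithinAt (fun y => ψ t y) (Uu T M ψ t x) (Icc (-M) M) x := by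
  have hline : HasDerivWithinAt (fun y : ℝ => ((t, y) : ℝ × ℝ)) ((0 : ℝ), (1 : ℝ))
      (Icc (-M) M) x := ((hasDerivWithinAt_const x _ t).prodMk (hasDerivWithinAt_id x _))
  exact (fd1_hasWithin hT hM hψ (mem_rect ht hx)).comp_hasDerivWithinAt x hline
    (fun y hy => Set.mk_mem_prod ht hy)

/-- time derivative, within version -/
lemma hasV {t x : ℝ} (ht : t ∈ Icc 0 T) (hx : x ∈ Icc (-M) M) :
    HasDerivWithinAt (fun τ => ψ τ x) (Vv T M ψ t x) (Icc 0 T) t := by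
  have hline : HasDerivWithinAt (fun τ : ℝ => ((τ, x) : ℝ × ℝ)) ((1 : ℝ), (0 : ℝ))
      (Icc 0 T) t := ((hasDerivWithinAt_id t _).prodMk (hasDerivWithinAt_const t _ x))
  exact (fd1_hasWithin hT hM hψ (mem_rect ht hx)).comp_hasDerivWithinAt t hline
    (fun τ hτ => Set.mk_mem_prod hτ hx)

/-- x-derivative of U, within version -/
lemma hasUx {t x : ℝ} (ht : t ∈ Icc 0 T) (hx : x ∈ Icc (-M) M) :
    HasDerivWithinAt (fun y => Uu T M ψ t y) (Ww T M ψ t x) (Icc (-M) M) x := by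
  have hline : HasDerivWithinAt (fun y : ℝ => ((t, y) : ℝ × ℝ)) ((0 : ℝ), (1 : ℝ))
      (Icc (-M) M) x := ((hasDerivWithinAt_const x _ t).prodMk (hasDerivWithinAt_id x _))
  have h2 : HasDerivWithinAt (fun y => fd1 T M ψ (t, y)) (fd2 T M ψ (t, x) (0, 1))
      (Icc (-M) M) x :=
    (fd2_hasWithin hT hM hψ (mem_rect ht hx)).comp_hasDerivWithinAt x hline
      (fun y hy => Set.mk_mem_prod ht hy)
  have := h2.clm_apply (hasDerivWithinAt_const x _ ((0 : ℝ), (1 : ℝ)))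
  simpa [Uu, Ww] using this

/-- x-derivative of V, within version (not yet symmetrized) -/
lemma hasVx {t x : ℝ} (ht : t ∈ Icc 0 T) (hx : x ∈ Icc (-M) M) :
    HasDerivWithinAt (fun y => Vv T M ψ t y) (fd2 T M ψ (t, x) (0, 1) (1, 0))
      (Icc (-M) M) x := by
  have hline : HasDerivWithinAt (fun y : ℝ => ((t, y) : ℝ × ℝ)) ((0 : ℝ), (1 : ℝ))
      (Icc (-M) M) x := ((hasDerivWithinAt_const x _ t).prodMk (hasDerivWithinAt_id x _))
  have h2 : HasDerivWithinAt (fun y => fd1 T M ψ (t, y)) (fd2 T M ψ (t, x) (0, 1))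
      (Icc (-M) M) x :=
    (fd2_hasWithin hT hM hψ (mem_rect ht hx)).comp_hasDerivWithinAt x hline
      (fun y hy => Set.mk_mem_prod ht hy)
  have := h2.clm_apply (hasDerivWithinAt_const x _ ((1 : ℝ), (0 : ℝ)))
  simpa [Vv] using this

/-- t-derivative of U at interior points -/
lemma hasUt {t x : ℝ} (ht : t ∈ Ioo 0 T) (hx : x ∈ Ioo (-M) M) :
    HasDerivAt (fun τ => Uu T M ψ τ x) (Xx T M ψ t x) t := by
  have hline : HasDerivAt (fun τ : ℝ => ((τ, x) : ℝ × ℝ)) ((1 : ℝ), (0 : ℝ)) t :=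
    ((hasDerivAt_id t).prodMk (hasDerivAt_const t x))
  have h2 : HasDerivAt (fun τ => fd1 T M ψ (τ, x)) (fd2 T M ψ (t, x) (1, 0)) t :=
    (fd2_hasAt hT hM hψ (Set.mk_mem_prod ht hx : ((t,x):ℝ×ℝ) ∈ Ioo 0 T ×ˢ Ioo (-M) M)).comp_hasDerivAt t hline
  have := h2.clm_apply (hasDerivAt_const t ((0 : ℝ), (1 : ℝ)))
  simpa [Uu, Xx] using this

/-- plain deriv in x equals U at spatially interior points, all t -/
lemma deriv_eq_U {t x : ℝ} (ht : t ∈ Icc 0 T) (hx : x ∈ Ioo (-M) M) :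
    deriv (fun y => ψ t y) x = Uu T M ψ t x :=
  ((hasU hT hM hψ ht (Ioo_subset_Icc_self hx)).hasDerivAt
    (Icc_mem_nhds hx.1 hx.2)).deriv

/-- plain second deriv in x equals W at spatially interior points, all t -/
lemma deriv2_eq_W {t x : ℝ} (ht : t ∈ Icc 0 T) (hx : x ∈ Ioo (-M) M) :
    deriv (deriv (fun y => ψ t y)) x = Ww T M ψ t x := by
  have h1 : deriv (fun y => ψ t y) =ᶠ[nhds x] fun y => Uu T M ψ t y := by
    filter_upwards [Ioo_mem_nhds hx.1 hx.2] with y hy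
    exact deriv_eq_U hT hM hψ ht hy
  rw [h1.deriv_eq]
  exact ((hasUx hT hM hψ ht (Ioo_subset_Icc_self hx)).hasDerivAt
    (Icc_mem_nhds hx.1 hx.2)).deriv

/-- plain deriv in t equals V at temporally interior points, all x -/
lemma deriv_eq_V {t x : ℝ} (ht : t ∈ Ioo 0 T) (hx : x ∈ Icc (-M) M) :
    deriv (fun τ => ψ τ x) t = Vv T M ψ t x :=
  ((hasV hT hM hψ (Ioo_subset_Icc_self ht) hx).hasDerivAt
    (Icc_mem_nhds ht.1 ht.2)).deriv

end Slice

section Cont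
variable {T M : ℝ} {ψ : ℝ → ℝ → ℝ}
variable (hT : 0 < T) (hM : 0 < M)
variable (hψ : ContDiffOn ℝ 2 (Psi ψ) (Rect T M))
include hT hM hψ

lemma contU : ContinuousOn (fun p : ℝ × ℝ => Uu T M ψ p.1 p.2) (Rect T M) := by
  simpa [Uu] using (fd1_contOn hT hM hψ).clm_apply
    (continuousOn_const (c := ((0 : ℝ), (1 : ℝ))))

lemma contV : ContinuousOn (fun p : ℝ × ℝ => Vv T M ψ p.1 p.2) (Rect T M) := by
  simpa [Vv] using (fd1_contOn hT hM hψ).clm_apply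
    (continuousOn_const (c := ((1 : ℝ), (0 : ℝ))))

lemma contW : ContinuousOn (fun p : ℝ × ℝ => Ww T M ψ p.1 p.2) (Rect T M) := by
  simpa [Ww] using ((fd2_contOn hT hM hψ).clm_apply
    (continuousOn_const (c := ((0 : ℝ), (1 : ℝ))))).clm_apply
    (continuousOn_const (c := ((0 : ℝ), (1 : ℝ))))

lemma contX : ContinuousOn (fun p : ℝ × ℝ => Xx T M ψ p.1 p.2) (Rect T M) := by
  simpa [Xx] using ((fd2_contOn hT hM hψ).clm_apply
    (continuousOn_const (c := ((1 : ℝ), (0 : ℝ))))).clm_apply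
    (continuousOn_const (c := ((0 : ℝ), (1 : ℝ))))

end Cont

section Helpers

lemma sliceContOn {t0 t1 A B : ℝ} {H : ℝ → ℝ → ℝ}
    (hH : ContinuousOn (fun p : ℝ × ℝ => H p.1 p.2) (Icc t0 t1 ×ˢ Icc A B))
    {t : ℝ} (ht : t ∈ Icc t0 t1) : ContinuousOn (fun x => H t x) (Icc A B) :=
  hH.comp (Continuous.continuousOn (by continuity)) (fun y hy => Set.mk_mem_prod ht hy)

lemma sliceIntegrable {t0 t1 A B : ℝ} (hAB : A ≤ B) {H : ℝ → ℝ → ℝ}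
    (hH : ContinuousOn (fun p : ℝ × ℝ => H p.1 p.2) (Icc t0 t1 ×ˢ Icc A B))
    {t : ℝ} (ht : t ∈ Icc t0 t1) : IntervalIntegrable (fun x => H t x) volume A B :=
  ContinuousOn.intervalIntegrable (by rw [uIcc_of_le hAB]; exact sliceContOn hH ht)

lemma sliceMeas {t0 t1 A B : ℝ} (hAB : A ≤ B) {H : ℝ → ℝ → ℝ}
    (hH : ContinuousOn (fun p : ℝ × ℝ => H p.1 p.2) (Icc t0 t1 ×ˢ Icc A B))
    {t : ℝ} (ht : t ∈ Icc t0 t1) :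
    AEStronglyMeasurable (fun x => H t x) (volume.restrict (Ι A B)) := by
  rw [uIoc_of_le hAB]
  exact (((sliceContOn hH ht)).mono Ioc_subset_Icc_self).aestronglyMeasurable measurableSet_Ioc

lemma ae_ne_top (M : ℝ) : ∀ᵐ x : ℝ, x ≠ M := by
  rw [MeasureTheory.ae_iff]
  simp only [ne_eq, not_not, Set.setOf_eq_eq_singleton]
  exact measure_singleton _

end Helpers

section StepA
variable {T M : ℝ} {ψ : ℝ → ℝ → ℝ} {ζ : ℝ → ℝ}
variable (hT : 0 < T) (hM : 0 < M)
variable (hψ : ContDiffOn ℝ 2 (Psi ψ) (Rect T M))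
variable (hζC1 : ContDiff ℝ 1 ζ)

include hT hM hψ hζC1 in
lemma stepA {t₀ : ℝ} (ht₀ : t₀ ∈ Ioo 0 T) :
    HasDerivAt (fun t => ∫ x in (-M)..M, ζ t * (Uu T M ψ t x) ^ 2)
      (∫ x in (-M)..M,
        deriv ζ t₀ * (Uu T M ψ t₀ x) ^ 2 + ζ t₀ * (2 * Uu T M ψ t₀ x * Xx T M ψ t₀ x)) t₀ := by
  have hMM : -M ≤ M := by linarith
  set F : ℝ → ℝ → ℝ := fun t x => ζ t * (Uu T M ψ t x) ^ 2 with hF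
  set F' : ℝ → ℝ → ℝ := fun t x =>
    deriv ζ t * (Uu T M ψ t x) ^ 2 + ζ t * (2 * Uu T M ψ t x * Xx T M ψ t x) with hF'
  have hζc : Continuous ζ := hζC1.continuous
  have hζ'c : Continuous (deriv ζ) := hζC1.continuous_deriv le_rfl
  have hFcont : ContinuousOn (fun p : ℝ × ℝ => F p.1 p.2) (Rect T M) :=
    ((hζc.comp continuous_fst).continuousOn.mul ((contU hT hM hψ).pow 2))
  have hF'cont : ContinuousOn (fun p : ℝ × ℝ => F' p.1 p.2) (Rect T M) := by
    apply ContinuousOn.add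
    · exact ((hζ'c.comp continuous_fst).continuousOn.mul ((contU hT hM hψ).pow 2))
    · exact ((hζc.comp continuous_fst).continuousOn.mul
        ((continuousOn_const.mul (contU hT hM hψ)).mul (contX hT hM hψ)))
  obtain ⟨C, hC⟩ := ((isCompact_Icc.prod isCompact_Icc).exists_bound_of_continuousOn hF'cont)
  set ε : ℝ := min t₀ (T - t₀) with hε
  have hεpos : 0 < ε := lt_min ht₀.1 (by linarith [ht₀.2])
  have hball : Metric.ball t₀ ε ⊆ Ioo 0 T := by
    intro t ht
    rw [Metric.mem_ball, Real.dist_eq, abs_lt] at ht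
    constructor
    · have := min_le_left t₀ (T - t₀); linarith [ht.1]
    · have := min_le_right t₀ (T - t₀); linarith [ht.2]
  have key := intervalIntegral.hasDerivAt_integral_of_dominated_loc_of_deriv_le
    (F := F) (F' := F') (x₀ := t₀) (a := -M) (b := M) (bound := fun _ => C)
    (μ := volume) (Metric.ball_mem_nhds t₀ hεpos) ?_ ?_ ?_ ?_ ?_ ?_
  · exact key.2
  · filter_upwards [Metric.ball_mem_nhds t₀ hεpos] with t ht
    exact sliceMeas hMM hFcont (Ioo_subset_Icc_self (hball ht))
  · exact sliceIntegrable hMM hFcont (Ioo_subset_Icc_self ht₀)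
  · exact sliceMeas hMM hF'cont (Ioo_subset_Icc_self ht₀)
  · filter_upwards [] with x hx t ht
    rw [uIoc_of_le hMM] at hx
    rw [Real.norm_eq_abs]
    exact hC (t, x) (Set.mk_mem_prod (Ioo_subset_Icc_self (hball ht)) (Ioc_subset_Icc_self hx))
  · exact intervalIntegrable_const
  · filter_upwards [ae_ne_top M] with x hxne hx t ht
    rw [uIoc_of_le hMM] at hx
    have hxIoo : x ∈ Ioo (-M) M := ⟨hx.1, lt_of_le_of_ne hx.2 hxne⟩
    have ht' : t ∈ Ioo 0 T := hball ht
    have h1 : HasDerivAt ζ (deriv ζ t) t := (hζC1.differentiable one_ne_zero t).hasDerivAt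
    have h2 : HasDerivAt (fun τ => Uu T M ψ τ x) (Xx T M ψ t x) t := hasUt hT hM hψ ht' hxIoo
    have h3 := h1.mul (h2.pow 2)
    simp only [hF, hF']
    simpa [pow_one, Pi.mul_def, Pi.pow_def] using h3

end StepA

section StepB
variable {α T M : ℝ} {ψ : ℝ → ℝ → ℝ} {a : ℝ → ℝ → ℝ}
variable (hα : 0 < α) (hT : 0 < T) (hM : 0 < M)
variable (hψ : ContDiffOn ℝ 2 (Psi ψ) (Rect T M))
variable (ha : ContinuousOn (fun p : ℝ × ℝ => a p.1 p.2) (Set.Icc 0 T ×ˢ Set.Icc (-M) M))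
variable (hbd : ∀ t ∈ Set.Icc (0 : ℝ) T, ψ t (-M) = 0 ∧ ψ t M = 0 ∧
      deriv (fun τ => ψ τ (-M)) t = 0 ∧ deriv (fun τ => ψ τ M) t = 0)
variable (heq : ∀ t ∈ Set.Icc (0 : ℝ) T, ∀ x ∈ Set.Icc (-M) M,
      deriv (fun τ => ψ τ x) t + (1 / α) * a t x * deriv (deriv (fun y => ψ t y)) x = 0)

include hα hT hM hψ ha hbd heq in
lemma stepB {t : ℝ} (ht : t ∈ Ioo 0 T) :
    ∫ x in (-M)..M, 2 * Uu T M ψ t x * Xx T M ψ t x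
      = (2 / α) * ∫ x in (-M)..M, a t x * (Ww T M ψ t x) ^ 2 := by
  have hMM : -M ≤ M := by linarith
  have hMM' : -M < M := by linarith
  have ht' : t ∈ Icc 0 T := Ioo_subset_Icc_self ht
  -- the PDE in terms of V and W
  have hVW : ∀ x ∈ Ioo (-M) M, Vv T M ψ t x = -(1 / α) * a t x * Ww T M ψ t x := by
    intro x hx
    have h := heq t ht' x (Ioo_subset_Icc_self hx)
    rw [deriv_eq_V hT hM hψ ht (Ioo_subset_Icc_self hx),
      deriv2_eq_W hT hM hψ ht' hx] at h
    linarith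
  -- boundary values of V vanish
  have hVm : Vv T M ψ t (-M) = 0 := by
    rw [← deriv_eq_V hT hM hψ ht (left_mem_Icc.2 hMM)]
    exact (hbd t ht').2.2.1
  have hVM : Vv T M ψ t M = 0 := by
    rw [← deriv_eq_V hT hM hψ ht (right_mem_Icc.2 hMM)]
    exact (hbd t ht').2.2.2
  -- integration by parts
  have hucont : ContinuousOn (fun x => Vv T M ψ t x) (Set.uIcc (-M) M) := by
    rw [uIcc_of_le hMM]; exact sliceContOn (contV hT hM hψ) ht'
  have hvcont : ContinuousOn (fun x => Uu T M ψ t x) (Set.uIcc (-M) M) := by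
    rw [uIcc_of_le hMM]; exact sliceContOn (contU hT hM hψ) ht'
  have huu' : ∀ x ∈ Ioo (min (-M) M) (max (-M) M),
      HasDerivWithinAt (fun y => Vv T M ψ t y) (Xx T M ψ t x) (Ioi x) x := by
    intro x hx
    rw [min_eq_left hMM, max_eq_right hMM] at hx
    have h := (hasVx hT hM hψ ht' (Ioo_subset_Icc_self hx)).hasDerivAt
      (Icc_mem_nhds hx.1 hx.2)
    have hsym := fd2_symm hT hM hψ
      (Set.mk_mem_prod ht hx : ((t, x) : ℝ × ℝ) ∈ Ioo 0 T ×ˢ Ioo (-M) M)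
      ((0 : ℝ), (1 : ℝ)) ((1 : ℝ), (0 : ℝ))
    rw [hsym] at h
    exact h.hasDerivWithinAt
  have hvv' : ∀ x ∈ Ioo (min (-M) M) (max (-M) M),
      HasDerivWithinAt (fun y => Uu T M ψ t y) (Ww T M ψ t x) (Ioi x) x := by
    intro x hx
    rw [min_eq_left hMM, max_eq_right hMM] at hx
    exact ((hasUx hT hM hψ ht' (Ioo_subset_Icc_self hx)).hasDerivAt
      (Icc_mem_nhds hx.1 hx.2)).hasDerivWithinAt
  have hu'int : IntervalIntegrable (fun x => Xx T M ψ t x) volume (-M) M :=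
    sliceIntegrable hMM (contX hT hM hψ) ht'
  have hv'int : IntervalIntegrable (fun x => Ww T M ψ t x) volume (-M) M :=
    sliceIntegrable hMM (contW hT hM hψ) ht'
  have ibp := intervalIntegral.integral_mul_deriv_eq_deriv_mul_of_hasDeriv_right
    hucont hvcont huu' hvv' hu'int hv'int
  rw [hVm, hVM] at ibp
  -- ibp : ∫ V * W = 0 * U M - 0 * U (-M) - ∫ X * U
  have h1 : (∫ x in (-M)..M, Xx T M ψ t x * Uu T M ψ t x)
      = - ∫ x in (-M)..M, Vv T M ψ t x * Ww T M ψ t x := by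
    rw [ibp]; ring
  have h2 : (∫ x in (-M)..M, Vv T M ψ t x * Ww T M ψ t x)
      = -(1 / α) * ∫ x in (-M)..M, a t x * (Ww T M ψ t x) ^ 2 := by
    rw [← intervalIntegral.integral_const_mul]
    apply intervalIntegral.integral_congr_ae
    filter_upwards [ae_ne_top M] with x hxne hx
    rw [uIoc_of_le hMM] at hx
    have hxIoo : x ∈ Ioo (-M) M := ⟨hx.1, lt_of_le_of_ne hx.2 hxne⟩
    rw [hVW x hxIoo]; ring
  calc (∫ x in (-M)..M, 2 * Uu T M ψ t x * Xx T M ψ t x)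
      = 2 * ∫ x in (-M)..M, Xx T M ψ t x * Uu T M ψ t x := by
        rw [← intervalIntegral.integral_const_mul]
        apply intervalIntegral.integral_congr
        intro x _; ring
    _ = (2 / α) * ∫ x in (-M)..M, a t x * (Ww T M ψ t x) ^ 2 := by
        rw [h1, h2]; field_simp
end StepB

set_option maxHeartbeats 2000000

lemma tsliceContOn {t0 t1 A B : ℝ} {H : ℝ → ℝ → ℝ}
    (hH : ContinuousOn (fun p : ℝ × ℝ => H p.1 p.2) (Icc t0 t1 ×ˢ Icc A B))
    {x : ℝ} (hx : x ∈ Icc A B) : ContinuousOn (fun t => H t x) (Icc t0 t1) :=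
  hH.comp (Continuous.continuousOn (by continuity)) (fun τ hτ => Set.mk_mem_prod hτ hx)

lemma paramCont {T₀ T₁ A B : ℝ} (hAB : A ≤ B) {H : ℝ → ℝ → ℝ}
    (hH : ContinuousOn (fun p : ℝ × ℝ => H p.1 p.2) (Icc T₀ T₁ ×ˢ Icc A B)) :
    ContinuousOn (fun t => ∫ x in A..B, H t x) (Icc T₀ T₁) := by
  obtain ⟨C, hC⟩ := (((isCompact_Icc).prod isCompact_Icc).exists_bound_of_continuousOn hH)
  intro t₀ ht₀
  apply continuousWithinAt_of_dominated_interval (bound := fun _ => C)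
  · filter_upwards [self_mem_nhdsWithin] with t ht using sliceMeas hAB hH ht
  · filter_upwards [self_mem_nhdsWithin] with t ht
    filter_upwards [] with x hx
    rw [uIoc_of_le hAB] at hx
    exact hC (t, x) (Set.mk_mem_prod ht (Ioc_subset_Icc_self hx))
  · exact intervalIntegrable_const
  · filter_upwards [] with x hx
    rw [uIoc_of_le hAB] at hx
    exact (tsliceContOn hH (Ioc_subset_Icc_self hx)) t₀ ht₀

/-- Energy estimate for the backward dual parabolic problem
`∂ₜψ + (1/α) a ∂ₓₓψ = 0` on `[0,T] × [-M,M]`. -/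
theorem dual_problem_energy_estimate
    (α T M η c : ℝ) (hα : 1 < α) (hT : 0 < T) (hM : 0 < M) (hη : 0 < η) (hc : 0 < c)
    (ψ : ℝ → ℝ → ℝ) (a : ℝ → ℝ → ℝ) (ζ : ℝ → ℝ) (θ : ℝ → ℝ)
    (hψ : ContDiffOn ℝ 2 (fun p : ℝ × ℝ => ψ p.1 p.2) (Set.Icc 0 T ×ˢ Set.Icc (-M) M))
    (hbd : ∀ t ∈ Set.Icc (0 : ℝ) T, ψ t (-M) = 0 ∧ ψ t M = 0 ∧
      deriv (fun τ => ψ τ (-M)) t = 0 ∧ deriv (fun τ => ψ τ M) t = 0)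
    (ha : ContinuousOn (fun p : ℝ × ℝ => a p.1 p.2) (Set.Icc 0 T ×ˢ Set.Icc (-M) M))
    (haη : ∀ t ∈ Set.Icc (0 : ℝ) T, ∀ x ∈ Set.Icc (-M) M, η ≤ a t x)
    (hζC1 : ContDiff ℝ 1 ζ)
    (hζlb : ∀ t ∈ Set.Icc (0 : ℝ) T, 1 / 2 ≤ ζ t)
    (hζub : ∀ t ∈ Set.Icc (0 : ℝ) T, ζ t ≤ 1)
    (hζ' : ∀ t ∈ Set.Icc (0 : ℝ) T, c ≤ deriv ζ t)
    (heq : ∀ t ∈ Set.Icc (0 : ℝ) T, ∀ x ∈ Set.Icc (-M) M,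
      deriv (fun τ => ψ τ x) t + (1 / α) * a t x * deriv (deriv (fun y => ψ t y)) x = 0)
    (hθ : ∀ x ∈ Set.Icc (-M) M, ψ T x = θ x) :
    (∫ t in (0 : ℝ)..T, ∫ x in (-M)..M,
        deriv ζ t * (deriv (fun y => ψ t y) x) ^ 2 +
          (2 / α) * ζ t * a t x * (deriv (deriv (fun y => ψ t y)) x) ^ 2)
      ≤ ∫ x in (-M)..M, ζ T * (deriv θ x) ^ 2 ∧
    c * (∫ t in (0 : ℝ)..T, ∫ x in (-M)..M, (deriv (fun y => ψ t y) x) ^ 2) +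
      (1 / α) * (∫ t in (0 : ℝ)..T, ∫ x in (-M)..M,
        a t x * (deriv (deriv (fun y => ψ t y)) x) ^ 2)
      ≤ ∫ x in (-M)..M, (deriv θ x) ^ 2 := by
  have hα0 : (0 : ℝ) < α := by linarith
  have hMM : -M ≤ M := by linarith
  have hMM' : -M < M := by linarith
  have hψ' : ContDiffOn ℝ 2 (Psi ψ) (Rect T M) := hψ
  have hζc : Continuous ζ := hζC1.continuous
  have hζ'c : Continuous (deriv ζ) := hζC1.continuous_deriv le_rfl
  set U : ℝ → ℝ → ℝ := fun t x => Uu T M ψ t x with hU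
  set W : ℝ → ℝ → ℝ := fun t x => Ww T M ψ t x with hW
  set X : ℝ → ℝ → ℝ := fun t x => Xx T M ψ t x with hX
  -- energy and its derivative
  set I : ℝ → ℝ := fun t => ∫ x in (-M)..M, ζ t * (U t x) ^ 2 with hI
  set G : ℝ → ℝ := fun t =>
    ∫ x in (-M)..M, deriv ζ t * (U t x) ^ 2 + (2 / α) * ζ t * a t x * (W t x) ^ 2 with hG
  -- continuity on rect of various integrands
  have hUc := contU hT hM hψ'
  have hWc := contW hT hM hψ'
  have hXc := contX hT hM hψ'
  have hIH : ContinuousOn (fun p : ℝ × ℝ => ζ p.1 * (U p.1 p.2) ^ 2) (Rect T M) :=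
    (hζc.comp continuous_fst).continuousOn.mul (hUc.pow 2)
  have hGH : ContinuousOn
      (fun p : ℝ × ℝ => deriv ζ p.1 * (U p.1 p.2) ^ 2 +
        (2 / α) * ζ p.1 * a p.1 p.2 * (W p.1 p.2) ^ 2) (Rect T M) := by
    apply ContinuousOn.add
    · exact (hζ'c.comp continuous_fst).continuousOn.mul (hUc.pow 2)
    · exact ((continuousOn_const.mul (hζc.comp continuous_fst).continuousOn).mul ha).mul
        (hWc.pow 2)
  have hIcont : ContinuousOn I (Icc 0 T) := paramCont (H := fun t x => ζ t * (U t x) ^ 2) hMM hIH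
  have hGcont : ContinuousOn G (Icc 0 T) := paramCont
    (H := fun t x => deriv ζ t * (U t x) ^ 2 + (2 / α) * ζ t * a t x * (W t x) ^ 2) hMM hGH
  have hGint : IntervalIntegrable G volume 0 T :=
    ContinuousOn.intervalIntegrable (by rw [uIcc_of_le hT.le]; exact hGcont)
  -- derivative of I is G on the interior
  have hderiv : ∀ t ∈ Ioo 0 T, HasDerivAt I (G t) t := by
    intro t ht
    have key := stepA hT hM hψ' hζC1 ht
    have hsplit : (∫ x in (-M)..M,
        deriv ζ t * (U t x) ^ 2 + ζ t * (2 * U t x * X t x))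
        = ∫ x in (-M)..M, deriv ζ t * (U t x) ^ 2 + (2 / α) * ζ t * a t x * (W t x) ^ 2 := by
      have i1 : IntervalIntegrable (fun x => deriv ζ t * (U t x) ^ 2) volume (-M) M :=
        sliceIntegrable (H := fun t x => deriv ζ t * (U t x) ^ 2) hMM
          ((hζ'c.comp continuous_fst).continuousOn.mul (hUc.pow 2))
          (Ioo_subset_Icc_self ht)
      have i2 : IntervalIntegrable (fun x => ζ t * (2 * U t x * X t x)) volume (-M) M :=
        sliceIntegrable (H := fun t x => ζ t * (2 * U t x * X t x)) hMM
          ((hζc.comp continuous_fst).continuousOn.mul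
          ((continuousOn_const.mul hUc).mul hXc)) (Ioo_subset_Icc_self ht)
      have i3 : IntervalIntegrable
          (fun x => (2 / α) * ζ t * a t x * (W t x) ^ 2) volume (-M) M :=
        sliceIntegrable (H := fun t x => (2 / α) * ζ t * a t x * (W t x) ^ 2) hMM
          (((continuousOn_const.mul
          (hζc.comp continuous_fst).continuousOn).mul ha).mul (hWc.pow 2))
          (Ioo_subset_Icc_self ht)
      have i4 : IntervalIntegrable (fun x => a t x * (W t x) ^ 2) volume (-M) M :=
        sliceIntegrable (H := fun t x => a t x * (W t x) ^ 2) hMM (ha.mul (hWc.pow 2))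
          (Ioo_subset_Icc_self ht)
      rw [intervalIntegral.integral_add i1 i2]
      rw [intervalIntegral.integral_add i1 i3]
      congr 1
      rw [intervalIntegral.integral_const_mul, stepB hα0 hT hM hψ' ha hbd heq ht]
      rw [show (∫ x in (-M)..M, (2 / α) * ζ t * a t x * (W t x) ^ 2)
          = ∫ x in (-M)..M, (ζ t * (2 / α)) * (a t x * (W t x) ^ 2) from
        intervalIntegral.integral_congr (fun x _ => by ring)]
      rw [intervalIntegral.integral_const_mul]
      ring
    have key2 : HasDerivAt I
        (∫ x in (-M)..M, deriv ζ t * (U t x) ^ 2 + (2 / α) * ζ t * a t x * (W t x) ^ 2) t :=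
      hsplit ▸ key
    exact key2
  -- FTC
  have hFTC : ∫ t in (0 : ℝ)..T, G t = I T - I 0 :=
    intervalIntegral.integral_eq_sub_of_hasDeriv_right_of_le hT.le hIcont
      (fun t ht => (hderiv t ht).hasDerivWithinAt) hGint
  have hI0 : 0 ≤ I 0 := by
    apply intervalIntegral.integral_nonneg hMM
    intro x _
    have := hζlb 0 ⟨le_rfl, hT.le⟩
    positivity
  have hmain : ∫ t in (0 : ℝ)..T, G t ≤ I T := by rw [hFTC]; linarith
  -- identification of plain derivatives with U, W on the interior
  have hUeq : ∀ t ∈ Icc 0 T, ∀ᵐ x, x ∈ Ι (-M) M →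
      deriv (fun y => ψ t y) x = U t x ∧ deriv (deriv (fun y => ψ t y)) x = W t x := by
    intro t ht
    filter_upwards [ae_ne_top M] with x hxne hx
    rw [uIoc_of_le hMM] at hx
    have hxIoo : x ∈ Ioo (-M) M := ⟨hx.1, lt_of_le_of_ne hx.2 hxne⟩
    exact ⟨deriv_eq_U hT hM hψ' ht hxIoo, deriv2_eq_W hT hM hψ' ht hxIoo⟩
  -- rewrite the statement's double integrals
  have hLHS1 : (∫ t in (0 : ℝ)..T, ∫ x in (-M)..M,
      deriv ζ t * (deriv (fun y => ψ t y) x) ^ 2 +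
        (2 / α) * ζ t * a t x * (deriv (deriv (fun y => ψ t y)) x) ^ 2)
      = ∫ t in (0 : ℝ)..T, G t := by
    apply intervalIntegral.integral_congr
    intro t ht
    rw [uIcc_of_le hT.le] at ht
    apply intervalIntegral.integral_congr_ae
    filter_upwards [hUeq t ht] with x hx hxI
    rw [(hx hxI).1, (hx hxI).2]
  -- value of I T via θ
  have hITval : ∀ᵐ x, x ∈ Ι (-M) M → deriv θ x = U T x := by
    filter_upwards [hUeq T ⟨hT.le, le_rfl⟩, ae_ne_top M] with x hx hxne hxI
    have hxI' := hxI
    rw [uIoc_of_le hMM] at hxI'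
    have hxIoo : x ∈ Ioo (-M) M := ⟨hxI'.1, lt_of_le_of_ne hxI'.2 hxne⟩
    have hfe : (fun y => θ y) =ᶠ[nhds x] fun y => ψ T y := by
      filter_upwards [Ioo_mem_nhds hxIoo.1 hxIoo.2] with y hy
      exact (hθ y (Ioo_subset_Icc_self hy)).symm
    rw [show deriv θ x = deriv (fun y => ψ T y) x from hfe.deriv_eq, (hx hxI).1]
  have hITeq : I T = ζ T * ∫ x in (-M)..M, (U T x) ^ 2 := by
    rw [hI, ← intervalIntegral.integral_const_mul]
  have hRHS1 : (∫ x in (-M)..M, ζ T * (deriv θ x) ^ 2)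
      = ζ T * ∫ x in (-M)..M, (U T x) ^ 2 := by
    rw [← intervalIntegral.integral_const_mul]
    apply intervalIntegral.integral_congr_ae
    filter_upwards [hITval] with x hx hxI
    rw [hx hxI]
  have hRHS2 : (∫ x in (-M)..M, (deriv θ x) ^ 2)
      = ∫ x in (-M)..M, (U T x) ^ 2 := by
    apply intervalIntegral.integral_congr_ae
    filter_upwards [hITval] with x hx hxI
    rw [hx hxI]
  constructor
  · rw [hLHS1, hRHS1, ← hITeq]
    exact hmain
  · -- second conclusion
    set IU : ℝ → ℝ := fun t => ∫ x in (-M)..M, (U t x) ^ 2 with hIU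
    set IW : ℝ → ℝ := fun t => ∫ x in (-M)..M, a t x * (W t x) ^ 2 with hIW
    have hIUcont : ContinuousOn IU (Icc 0 T) := paramCont (H := fun t x => (U t x) ^ 2) hMM (hUc.pow 2)
    have hIWcont : ContinuousOn IW (Icc 0 T) := paramCont (H := fun t x => a t x * (W t x) ^ 2) hMM (ha.mul (hWc.pow 2))
    have hIUint : IntervalIntegrable IU volume 0 T :=
      ContinuousOn.intervalIntegrable (by rw [uIcc_of_le hT.le]; exact hIUcont)
    have hIWint : IntervalIntegrable IW volume 0 T :=
      ContinuousOn.intervalIntegrable (by rw [uIcc_of_le hT.le]; exact hIWcont)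
    have hA2 : (∫ t in (0 : ℝ)..T, ∫ x in (-M)..M, (deriv (fun y => ψ t y) x) ^ 2)
        = ∫ t in (0 : ℝ)..T, IU t := by
      apply intervalIntegral.integral_congr
      intro t ht
      rw [uIcc_of_le hT.le] at ht
      apply intervalIntegral.integral_congr_ae
      filter_upwards [hUeq t ht] with x hx hxI
      rw [(hx hxI).1]
    have hB2 : (∫ t in (0 : ℝ)..T, ∫ x in (-M)..M,
        a t x * (deriv (deriv (fun y => ψ t y)) x) ^ 2)
        = ∫ t in (0 : ℝ)..T, IW t := by
      apply intervalIntegral.integral_congr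
      intro t ht
      rw [uIcc_of_le hT.le] at ht
      apply intervalIntegral.integral_congr_ae
      filter_upwards [hUeq t ht] with x hx hxI
      rw [(hx hxI).2]
    have hptwise : ∀ t ∈ Icc 0 T, c * IU t + (1 / α) * IW t ≤ G t := by
      intro t ht
      have i5 : IntervalIntegrable (fun x => c * (U t x) ^ 2 + (1 / α) * (a t x * (W t x) ^ 2))
          volume (-M) M :=
        sliceIntegrable (H := fun t x => c * (U t x) ^ 2 + (1 / α) * (a t x * (W t x) ^ 2)) hMM
          ((continuousOn_const.mul (hUc.pow 2)).add
          (continuousOn_const.mul (ha.mul (hWc.pow 2)))) ht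
      have i6 : IntervalIntegrable
          (fun x => deriv ζ t * (U t x) ^ 2 + (2 / α) * ζ t * a t x * (W t x) ^ 2)
          volume (-M) M :=
        sliceIntegrable
          (H := fun t x => deriv ζ t * (U t x) ^ 2 + (2 / α) * ζ t * a t x * (W t x) ^ 2) hMM
          (((hζ'c.comp continuous_fst).continuousOn.mul (hUc.pow 2)).add
          (((continuousOn_const.mul (hζc.comp continuous_fst).continuousOn).mul ha).mul
            (hWc.pow 2))) ht
      have hsum : c * IU t + (1 / α) * IW t
          = ∫ x in (-M)..M, c * (U t x) ^ 2 + (1 / α) * (a t x * (W t x) ^ 2) := by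
        rw [hIU, hIW, ← intervalIntegral.integral_const_mul, ← intervalIntegral.integral_const_mul,
          ← intervalIntegral.integral_add
            (sliceIntegrable (H := fun t x => c * (U t x) ^ 2) hMM
              (continuousOn_const.mul (hUc.pow 2)) ht)
            (sliceIntegrable (H := fun t x => (1 / α) * (a t x * (W t x) ^ 2)) hMM
              (continuousOn_const.mul (ha.mul (hWc.pow 2))) ht)]
      rw [hsum, hG]
      apply intervalIntegral.integral_mono_on hMM i5 i6
      intro x hx
      have h1 : c * (U t x) ^ 2 ≤ deriv ζ t * (U t x) ^ 2 :=
        mul_le_mul_of_nonneg_right (hζ' t ht) (sq_nonneg _)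
      have haw : 0 ≤ a t x * (W t x) ^ 2 :=
        mul_nonneg (le_trans hη.le (haη t ht x hx)) (sq_nonneg _)
      have h2 : (1 / α) * (a t x * (W t x) ^ 2) ≤ (2 / α) * ζ t * (a t x * (W t x) ^ 2) := by
        apply mul_le_mul_of_nonneg_right ?_ haw
        have hlb := hζlb t ht
        have h21 : 1 / α ≤ (2 * ζ t) / α := by gcongr <;> linarith
        calc 1 / α ≤ (2 * ζ t) / α := h21
          _ = (2 / α) * ζ t := by ring
      calc c * (U t x) ^ 2 + (1 / α) * (a t x * (W t x) ^ 2)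
          ≤ deriv ζ t * (U t x) ^ 2 + (2 / α) * ζ t * (a t x * (W t x) ^ 2) := by linarith
        _ = deriv ζ t * (U t x) ^ 2 + (2 / α) * ζ t * a t x * (W t x) ^ 2 := by ring
    have hcomb : c * (∫ t in (0 : ℝ)..T, IU t) + (1 / α) * (∫ t in (0 : ℝ)..T, IW t)
        ≤ ∫ t in (0 : ℝ)..T, G t := by
      rw [← intervalIntegral.integral_const_mul, ← intervalIntegral.integral_const_mul,
        ← intervalIntegral.integral_add (hIUint.const_mul c) (hIWint.const_mul (1 / α))]
      apply intervalIntegral.integral_mono_on hT.le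
        ((hIUint.const_mul c).add (hIWint.const_mul (1 / α))) hGint
      exact hptwise
    have hIUT0 : 0 ≤ ∫ x in (-M)..M, (U T x) ^ 2 :=
      intervalIntegral.integral_nonneg hMM (fun x _ => sq_nonneg _)
    have hlast : I T ≤ ∫ x in (-M)..M, (U T x) ^ 2 := by
      rw [hITeq]
      nlinarith [hζub T ⟨hT.le, le_rfl⟩]
    rw [hA2, hB2, hRHS2]
    calc c * (∫ t in (0 : ℝ)..T, IU t) + (1 / α) * (∫ t in (0 : ℝ)..T, IW t)
        ≤ ∫ t in (0 : ℝ)..T, G t := hcomb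
      _ ≤ I T := hmain
      _ ≤ ∫ x in (-M)..M, (U T x) ^ 2 := hlast
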